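/- Let A = a₀ + a₁ with a₀ real and a₁ a nonzero pure quaternion, and B = b₀ + b₁ + b₂ with b₀ real, b₁ parallel to a₁, b₂ perpendicular to a₁; write B₁ = b₀ + b₁. Then in the dual quaternions, exp(A + εB) = e^{a₀} ( (cos|a₁| + (sin|a₁|/|a₁|)·a₁)(1 + εB₁) + ε (sin|a₁|/|a₁|)·b₂ ). -/

import Mathlib

open Quaternion DualNumber TrivSqZeroExt NormedSpace

set_option maxHeartbeats 1000000 in
theorem stmt_12 (a₀ b₀ : ℝ) (a₁ b₁ b₂ : ℍ[ℝ])
    (ha₁ : a₁.re = 0) (ha₁ne : a₁ ≠ 0) (hb₁re : b₁.re = 0) (hb₂re : b₂.re = 0)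
    (hpar : ∃ t : ℝ, b₁ = t • a₁) (hperp : b₂ * a₁ = -(a₁ * b₂)) :
    NormedSpace.exp ((inl ((a₀ : ℍ[ℝ]) + a₁) : DualNumber ℍ[ℝ]) + eps * inl ((b₀ : ℍ[ℝ]) + b₁ + b₂))
      = Real.exp a₀ •
        ((inl ((Real.cos ‖a₁‖ : ℍ[ℝ]) + (Real.sin ‖a₁‖ / ‖a₁‖) • a₁) : DualNumber ℍ[ℝ]) *
            (1 + eps * inl ((b₀ : ℍ[ℝ]) + b₁))
          + eps * inl ((Real.sin ‖a₁‖ / ‖a₁‖) • b₂)) := by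
  obtain ⟨t, rfl⟩ := hpar
  have hnorm : ‖a₁‖ ≠ 0 := norm_ne_zero_iff.mpr ha₁ne
  set s : ℝ := Real.sin ‖a₁‖ / ‖a₁‖ with hs_def
  clear_value s
  set n : ℝ := ‖a₁‖ ^ 2 with hn_def
  clear_value n
  have hn : n ≠ 0 := by rw [hn_def]; positivity
  have hstar : star a₁ = -a₁ := Quaternion.star_eq_neg.mpr ha₁
  have hsq : a₁ * a₁ = ((-n : ℝ) : ℍ[ℝ]) := by
    have h := Quaternion.self_mul_star (a := a₁)
    rw [hstar, mul_neg] at h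
    have h2 : a₁ * a₁ = -((normSq a₁ : ℝ) : ℍ[ℝ]) := neg_eq_iff_eq_neg.mp h
    rw [h2, Quaternion.normSq_eq_norm_mul_self, hn_def]
    push_cast
    rw [sq]
  set c : ℍ[ℝ] := (-(2 * n)⁻¹) • (b₂ * a₁) with hc_def
  clear_value c
  have hca : c * a₁ - a₁ * c = b₂ := by
    have h1 : b₂ * a₁ * a₁ = (-n) • b₂ := by
      rw [mul_assoc, hsq, Quaternion.mul_coe_eq_smul]
    have h2 : a₁ * (b₂ * a₁) = n • b₂ := by
      rw [← mul_assoc, ← neg_neg (a₁ * b₂), ← hperp, neg_mul, mul_assoc, hsq,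
        Quaternion.mul_coe_eq_smul, ← neg_smul, neg_neg]
    rw [hc_def, smul_mul_assoc, mul_smul_comm, h1, h2, smul_smul, smul_smul, ← sub_smul]
    have : -(2 * n)⁻¹ * -n - -(2 * n)⁻¹ * n = 1 := by field_simp; ring
    rw [this, one_smul]
  set A : ℍ[ℝ] := (a₀ : ℍ[ℝ]) + a₁ with hA_def
  clear_value A
  set B₁ : ℍ[ℝ] := (b₀ : ℍ[ℝ]) + t • a₁ with hB₁_def
  clear_value B₁
  have hcA : c * A - A * c = b₂ := by
    rw [hA_def, mul_add, add_mul, Quaternion.mul_coe_eq_smul, Quaternion.coe_mul_eq_smul]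
    rw [show a₀ • c + c * a₁ - (a₀ • c + a₁ * c) = c * a₁ - a₁ * c by abel, hca]
  -- dual number helpers
  have heps : ∀ x : ℍ[ℝ], (eps * inl x : DualNumber ℍ[ℝ]) = inr x := fun x => by
    refine TrivSqZeroExt.ext ?_ ?_
    · simp [TrivSqZeroExt.fst_mul]
    · simp [TrivSqZeroExt.snd_mul, op_smul_eq_mul]
  have hsq0 : (inr c : DualNumber ℍ[ℝ]) * inr c = 0 := inr_mul_inr _ _ _
  have huval : ((1 + inr c) * (1 - inr c) : DualNumber ℍ[ℝ]) = 1 := by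
    rw [mul_sub, mul_one, add_mul, one_mul, hsq0, add_zero]
    abel
  have huval' : ((1 - inr c) * (1 + inr c) : DualNumber ℍ[ℝ]) = 1 := by
    rw [sub_mul, one_mul, mul_add, mul_one, hsq0, add_zero]
    abel
  set u : (DualNumber ℍ[ℝ])ˣ := ⟨1 + inr c, 1 - inr c, huval, huval'⟩ with hu_def
  have hu1 : (u : DualNumber ℍ[ℝ]) = 1 + inr c := rfl
  have hu2 : (↑u⁻¹ : DualNumber ℍ[ℝ]) = 1 - inr c := rfl
  clear_value u
  have hconj : ∀ E F : ℍ[ℝ],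
      ((1 + inr c) * (inl E + inr F) * (1 - inr c) : DualNumber ℍ[ℝ])
        = inl E + inr (F + (c * E - E * c)) := by
    intro E F
    refine TrivSqZeroExt.ext ?_ ?_
    · simp
    · simp only [TrivSqZeroExt.snd_mul, TrivSqZeroExt.fst_mul, TrivSqZeroExt.snd_add,
        TrivSqZeroExt.fst_add, TrivSqZeroExt.fst_one, TrivSqZeroExt.snd_one,
        TrivSqZeroExt.fst_inl, TrivSqZeroExt.snd_inl, TrivSqZeroExt.fst_inr,
        TrivSqZeroExt.snd_inr, TrivSqZeroExt.fst_sub, TrivSqZeroExt.snd_sub,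
        op_smul_eq_mul, smul_eq_mul]
      noncomm_ring
  have key : (inl A + eps * inl (B₁ + b₂) : DualNumber ℍ[ℝ])
      = (u : DualNumber ℍ[ℝ]) * (inl A + inr B₁) * (↑u⁻¹ : DualNumber ℍ[ℝ]) := by
    rw [hu1, hu2, hconj, hcA, heps]
  have hcomm : MulOpposite.op (fst (inl A + inr B₁ : DualNumber ℍ[ℝ]))
      • (snd (inl A + inr B₁ : DualNumber ℍ[ℝ]))
      = fst (inl A + inr B₁ : DualNumber ℍ[ℝ]) • snd (inl A + inr B₁ : DualNumber ℍ[ℝ]) := by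
    simp only [TrivSqZeroExt.fst_add, TrivSqZeroExt.snd_add, TrivSqZeroExt.fst_inl,
      TrivSqZeroExt.snd_inl, TrivSqZeroExt.fst_inr, TrivSqZeroExt.snd_inr, add_zero, zero_add,
      op_smul_eq_mul, smul_eq_mul]
    rw [hA_def, hB₁_def]
    refine Commute.add_right ((Quaternion.coe_commute a₀ _).symm) ?_
    refine Commute.add_left (Quaternion.coe_commute b₀ a₁) ?_
    exact (Commute.refl a₁).smul_left t
  have hAre : A.re = a₀ := by simp [hA_def, ha₁]
  have hAim : A.im = a₁ := by
    ext <;> simp [hA_def, ha₁]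
  have hexpA : NormedSpace.exp A = Real.exp a₀ • ((Real.cos ‖a₁‖ : ℍ[ℝ]) + s • a₁) := by
    rw [Quaternion.exp_eq, hAre, hAim, ← Real.exp_eq_exp_ℝ, hs_def]
  have h3 : c * ((Real.cos ‖a₁‖ : ℍ[ℝ]) + s • a₁)
      - ((Real.cos ‖a₁‖ : ℍ[ℝ]) + s • a₁) * c = s • b₂ := by
    rw [mul_add, add_mul, mul_smul_comm, smul_mul_assoc,
      Quaternion.mul_coe_eq_smul, Quaternion.coe_mul_eq_smul, ← hca, smul_sub]
    abel
  have hE : NormedSpace.exp A • B₁ + (c * NormedSpace.exp A - NormedSpace.exp A * c)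
      = Real.exp a₀ • (((Real.cos ‖a₁‖ : ℍ[ℝ]) + s • a₁) * B₁) + Real.exp a₀ • (s • b₂) := by
    rw [hexpA, smul_eq_mul (α := ℍ[ℝ]), smul_mul_assoc, mul_smul_comm, smul_mul_assoc,
      ← smul_sub, h3]
  calc NormedSpace.exp ((inl A : DualNumber ℍ[ℝ]) + eps * inl (B₁ + b₂))
      = NormedSpace.exp ((u : DualNumber ℍ[ℝ]) * (inl A + inr B₁) * (↑u⁻¹ : DualNumber ℍ[ℝ])) := by rw [key]
    _ = (u : DualNumber ℍ[ℝ]) * NormedSpace.exp (inl A + inr B₁ : DualNumber ℍ[ℝ]) * (↑u⁻¹ : DualNumber ℍ[ℝ]) := by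
        letI : NormedAlgebra ℚ (DualNumber ℍ[ℝ]) := NormedAlgebra.restrictScalars ℚ ℝ _
        exact exp_units_conj u _
    _ = (u : DualNumber ℍ[ℝ]) * (inl (NormedSpace.exp A) + inr (NormedSpace.exp A • B₁)) * (↑u⁻¹ : DualNumber ℍ[ℝ]) := by
        rw [exp_def_of_smul_comm _ hcomm]
        simp only [TrivSqZeroExt.fst_add, TrivSqZeroExt.snd_add, TrivSqZeroExt.fst_inl,
          TrivSqZeroExt.snd_inl, TrivSqZeroExt.fst_inr, TrivSqZeroExt.snd_inr, add_zero, zero_add]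
    _ = inl (NormedSpace.exp A) + inr (NormedSpace.exp A • B₁ + (c * NormedSpace.exp A - NormedSpace.exp A * c)) := by
        rw [hu1, hu2, hconj]
    _ = _ := by
        rw [hE, hexpA, heps, heps]
        refine TrivSqZeroExt.ext ?_ ?_ <;>
          simp [TrivSqZeroExt.fst_mul, TrivSqZeroExt.snd_mul, TrivSqZeroExt.fst_smul,
            TrivSqZeroExt.snd_smul, smul_eq_mul, op_smul_eq_mul, smul_add]
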